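/- arXiv:1302.2309 — 4 statements merged into one kernel-verified Lean document; each statement's English description precedes it below -/
import Mathlib

section
/- Let G be a group acting on a nonempty topological space O in which any two nonempty open subsets have nonempty intersection. Suppose that for each integer m ≥ 1 there is a set R_m of m-tuples of pairwise distinct points of O (called 'regular' m-tuples) such that: (i) for every m-tuple (x_1, …, x_m) of pairwise distinct points of O there exists g ∈ G with (g·x_1, …, g·x_m) ∈ R_m; (ii) for every (x_1, …, x_m) ∈ R_m, the orbit of x_m under the pointwise stabilizer {g ∈ G : g·x_i = x_i for all i = 1, …, m−1} contains a nonempty open subset of O; (iii) if (x_1, …, x_{m+1}) ∈ R_{m+1}, then both (x_1, …, x_{m−1}, x_m) ∈ R_m and (x_1, …, x_{m−1}, x_{m+1}) ∈ R_m. Then for every m ≥ 1 the action of G on O is m-transitive: for any two m-tuples (x_1, …, x_m) and (y_1, …, y_m) of pairwise distinct points of O there exists g ∈ G with g·x_i = y_i for all i = 1, …, m. -/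
private lemma snoc_inj' {α : Type*} {n : ℕ} {p : Fin n → α} {a : α}
    (hp : Function.Injective p) (ha : a ∉ Set.range p) :
    Function.Injective (Fin.snoc p a : Fin (n + 1) → α) := by
  intro i j hij
  induction i using Fin.lastCases with
  | last =>
    induction j using Fin.lastCases with
    | last => rfl
    | cast j =>
      rw [Fin.snoc_last, Fin.snoc_castSucc] at hij
      exact absurd ⟨j, hij.symm⟩ ha
  | cast i =>
    induction j using Fin.lastCases with
    | last =>
      rw [Fin.snoc_last, Fin.snoc_castSucc] at hij
      exact absurd ⟨i, hij⟩ ha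
    | cast j =>
      rw [Fin.snoc_castSucc, Fin.snoc_castSucc] at hij
      exact congrArg Fin.castSucc (hp hij)

/-- Key step: the pointwise stabilizer of `m` distinct points acts transitively on
points outside them. -/
private lemma move_aux {G O : Type*} [Group G] [TopologicalSpace O] [MulAction G O]
    (hirr : ∀ U V : Set O, IsOpen U → IsOpen V → U.Nonempty → V.Nonempty → (U ∩ V).Nonempty)
    (R : (m : ℕ) → Set (Fin m → O))
    (hreg : ∀ m, 1 ≤ m → ∀ x : Fin m → O, Function.Injective x →
      ∃ g : G, (fun i => g • x i) ∈ R m)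
    (horb : ∀ m, (hm : 1 ≤ m) → ∀ x ∈ R m,
      ∃ U : Set O, IsOpen U ∧ U.Nonempty ∧
        U ⊆ {y | ∃ g : G, (∀ i : Fin m, (i : ℕ) < m - 1 → g • x i = x i) ∧
          g • x ⟨m - 1, Nat.sub_lt hm Nat.one_pos⟩ = y})
    (htrunc : ∀ m, (hm : 1 ≤ m) → ∀ x ∈ R (m + 1),
      (fun i : Fin m => x i.castSucc) ∈ R m ∧
      Function.update (fun i : Fin m => x i.castSucc) ⟨m - 1, Nat.sub_lt hm Nat.one_pos⟩ (x (Fin.last m))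
        ∈ R m)
    (m : ℕ) (p : Fin m → O) (a b : O)
    (hpa : Function.Injective (Fin.snoc p a : Fin (m + 1) → O))
    (hpb : Function.Injective (Fin.snoc p b : Fin (m + 1) → O)) :
    ∃ g : G, (∀ i, g • p i = p i) ∧ g • a = b := by
  by_cases hab : a = b
  · exact ⟨1, fun i => one_smul _ _, by rw [one_smul, hab]⟩
  -- injectivity facts
  have hp : Function.Injective p := fun i j h => by
    have : (i.castSucc : Fin (m+1)) = j.castSucc := hpa (by simpa using h)
    exact Fin.castSucc_injective _ this
  have hbr : b ∉ Set.range p := by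
    rintro ⟨j, hj⟩
    have : (Fin.last m : Fin (m+1)) = j.castSucc := hpb (by simp [hj])
    exact (Fin.castSucc_lt_last j).ne' this
  -- the (m+2)-tuple (p, a, b)
  set q : Fin (m + 2) → O := Fin.snoc (Fin.snoc p a) b with hq
  have hqinj : Function.Injective q := by
    apply snoc_inj' hpa
    rintro ⟨i, hi⟩
    induction i using Fin.lastCases with
    | last => rw [Fin.snoc_last] at hi; exact hab hi
    | cast i => rw [Fin.snoc_castSucc] at hi; exact hbr ⟨i, hi⟩
  obtain ⟨h, hh⟩ := hreg (m + 2) (by omega) q hqinj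
  obtain ⟨h1, h2⟩ := htrunc (m + 1) (by omega) _ hh
  set t1 : Fin (m + 1) → O := fun i => h • q i.castSucc with ht1
  set t2 : Fin (m + 1) → O :=
    Function.update t1 ⟨m, by omega⟩ (h • q (Fin.last (m + 1))) with ht2
  -- values of t1, t2
  have ht1p : ∀ j : Fin m, t1 j.castSucc = h • p j := by
    intro j
    show h • q j.castSucc.castSucc = h • p j
    rw [hq, Fin.snoc_castSucc, Fin.snoc_castSucc]
  have ht1a : t1 ⟨m, by omega⟩ = h • a := by
    show h • q (Fin.castSucc ⟨m, by omega⟩) = h • a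
    have : (Fin.castSucc (⟨m, by omega⟩ : Fin (m+1)) : Fin (m+2))
        = Fin.castSucc (Fin.last m) := rfl
    rw [this, hq, Fin.snoc_castSucc, Fin.snoc_last]
  have ht2p : ∀ j : Fin m, t2 j.castSucc = h • p j := by
    intro j
    rw [ht2, Function.update_of_ne (by simp [Fin.ext_iff, j.isLt.ne]), ht1p]
  have ht2b : t2 ⟨m, by omega⟩ = h • b := by
    rw [ht2, Function.update_self, hq, Fin.snoc_last]
  obtain ⟨U, hUo, hUne, hUsub⟩ := horb (m + 1) (by omega) t1 h1
  obtain ⟨V, hVo, hVne, hVsub⟩ := horb (m + 1) (by omega) t2 h2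
  obtain ⟨z, hzU, hzV⟩ := hirr U V hUo hVo hUne hVne
  obtain ⟨g1, hg1fix, hg1z⟩ := hUsub hzU
  obtain ⟨g2, hg2fix, hg2z⟩ := hVsub hzV
  simp only [Nat.add_sub_cancel] at hg1fix hg2fix hg1z hg2z
  refine ⟨h⁻¹ * g2⁻¹ * g1 * h, fun i => ?_, ?_⟩
  · have e1 : g1 • (h • p i) = h • p i := by
      have := hg1fix i.castSucc (by simpa using i.isLt)
      rwa [ht1p] at this
    have e2 : g2 • (h • p i) = h • p i := by
      have := hg2fix i.castSucc (by simpa using i.isLt)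
      rwa [ht2p] at this
    rw [mul_smul, mul_smul, mul_smul, e1, ← e2, inv_smul_smul, inv_smul_smul]
  · have e1 : g1 • (h • a) = z := by rwa [ht1a] at hg1z
    have e2 : g2 • (h • b) = z := by rwa [ht2b] at hg2z
    rw [mul_smul, mul_smul, mul_smul, e1, ← e2, inv_smul_smul, inv_smul_smul]

private lemma trans_aux {G O : Type*} [Group G] [TopologicalSpace O] [MulAction G O]
    (hirr : ∀ U V : Set O, IsOpen U → IsOpen V → U.Nonempty → V.Nonempty → (U ∩ V).Nonempty)
    (R : (m : ℕ) → Set (Fin m → O))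
    (hreg : ∀ m, 1 ≤ m → ∀ x : Fin m → O, Function.Injective x →
      ∃ g : G, (fun i => g • x i) ∈ R m)
    (horb : ∀ m, (hm : 1 ≤ m) → ∀ x ∈ R m,
      ∃ U : Set O, IsOpen U ∧ U.Nonempty ∧
        U ⊆ {y | ∃ g : G, (∀ i : Fin m, (i : ℕ) < m - 1 → g • x i = x i) ∧
          g • x ⟨m - 1, Nat.sub_lt hm Nat.one_pos⟩ = y})
    (htrunc : ∀ m, (hm : 1 ≤ m) → ∀ x ∈ R (m + 1),
      (fun i : Fin m => x i.castSucc) ∈ R m ∧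
      Function.update (fun i : Fin m => x i.castSucc) ⟨m - 1, Nat.sub_lt hm Nat.one_pos⟩ (x (Fin.last m))
        ∈ R m) :
    ∀ m, ∀ x y : Fin m → O, Function.Injective x → Function.Injective y →
      ∃ g : G, ∀ i, g • x i = y i := by
  intro m
  induction m with
  | zero => exact fun x y _ _ => ⟨1, fun i => i.elim0⟩
  | succ m ih =>
    intro x y hx hy
    obtain ⟨k, hk⟩ := ih (fun i => x i.castSucc) (fun i => y i.castSucc)
      (hx.comp (Fin.castSucc_injective m)) (hy.comp (Fin.castSucc_injective m))
    have hsa : (Fin.snoc (fun i : Fin m => y i.castSucc) (k • x (Fin.last m)) : Fin (m+1) → O)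
        = fun i => k • x i := by
      funext i
      induction i using Fin.lastCases with
      | last => rw [Fin.snoc_last]
      | cast j => rw [Fin.snoc_castSucc]; exact (hk j).symm
    have hsb : (Fin.snoc (fun i : Fin m => y i.castSucc) (y (Fin.last m)) : Fin (m+1) → O)
        = y := by
      funext i
      induction i using Fin.lastCases with
      | last => rw [Fin.snoc_last]
      | cast j => rw [Fin.snoc_castSucc]
    obtain ⟨g, hgfix, hga⟩ := move_aux hirr R hreg horb htrunc m
      (fun i : Fin m => y i.castSucc) (k • x (Fin.last m)) (y (Fin.last m))
      (by rw [hsa]; exact (MulAction.injective k).comp hx) (by rw [hsb]; exact hy)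
    refine ⟨g * k, fun i => ?_⟩
    induction i using Fin.lastCases with
    | last => rw [mul_smul]; exact hga
    | cast j => rw [mul_smul, hk j]; exact hgfix j

/-- Abstract core of Theorem 2.4: a group action on an "irreducible" topological space
admitting regular tuples with the stated properties is `m`-transitive for every `m ≥ 1`. -/
theorem infinitely_transitive_of_regular_tuples
    {G O : Type*} [Group G] [TopologicalSpace O] [MulAction G O] [Nonempty O]
    (hirr : ∀ U V : Set O, IsOpen U → IsOpen V → U.Nonempty → V.Nonempty → (U ∩ V).Nonempty)
    (R : (m : ℕ) → Set (Fin m → O))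
    (hRinj : ∀ m, 1 ≤ m → ∀ x ∈ R m, Function.Injective x)
    (hreg : ∀ m, 1 ≤ m → ∀ x : Fin m → O, Function.Injective x →
      ∃ g : G, (fun i => g • x i) ∈ R m)
    (horb : ∀ m, (hm : 1 ≤ m) → ∀ x ∈ R m,
      ∃ U : Set O, IsOpen U ∧ U.Nonempty ∧
        U ⊆ {y | ∃ g : G, (∀ i : Fin m, (i : ℕ) < m - 1 → g • x i = x i) ∧
          g • x ⟨m - 1, by omega⟩ = y})
    (htrunc : ∀ m, (hm : 1 ≤ m) → ∀ x ∈ R (m + 1),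
      (fun i : Fin m => x i.castSucc) ∈ R m ∧
      Function.update (fun i : Fin m => x i.castSucc) ⟨m - 1, by omega⟩ (x (Fin.last m))
        ∈ R m) :
    ∀ m, 1 ≤ m → ∀ x y : Fin m → O, Function.Injective x → Function.Injective y →
      ∃ g : G, ∀ i, g • x i = y i := by
  intro m _
  exact trans_aux hirr R hreg horb htrunc m
end

section
/- Let Y be a quasi-compact quasi-separated scheme, and let g_1, …, g_s ∈ Γ(Y, O_Y) be global sections such that the basic open subsets Y_{g_1}, …, Y_{g_s} (the loci where g_i is invertible) cover Y and each Y_{g_i} is an affine scheme. Let C be a subring of Γ(Y, O_Y) containing g_1, …, g_s such that for each i the ring Γ(Y_{g_i}, O_Y) is equal to the localization at (the restriction of) g_i of the image of C under the restriction map Γ(Y, O_Y) → Γ(Y_{g_i}, O_Y); that is, Γ(Y_{g_i}, O_Y) is generated as a ring by the image of C together with the inverse of the restriction of g_i. Then the canonical morphism Y → Spec C induced by the inclusion C ↪ Γ(Y, O_Y) is an open immersion, and it restricts to isomorphisms Y_{g_i} ≅ (Spec C)_{g_i} onto the corresponding basic open subsets of Spec C. -/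
open AlgebraicGeometry CategoryTheory TopologicalSpace

universe u

set_option maxHeartbeats 1000000 in
lemma aux_bij (Y : Scheme.{u}) [CompactSpace Y] [QuasiSeparatedSpace Y]
    (a : Γ(Y, ⊤)) (C : Subring Γ(Y, ⊤)) (ha : a ∈ C)
    (hgen : ∀ h : Γ(Y, Y.basicOpen a),
      h * (Y.presheaf.map (homOfLE (le_top : Y.basicOpen a ≤ ⊤)).op) a = 1 →
      Subring.closure
        ((Y.presheaf.map (homOfLE (le_top : Y.basicOpen a ≤ ⊤)).op) '' (C : Set Γ(Y, ⊤))
          ∪ {h}) = ⊤)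
    (e : Y.basicOpen a ≤ (Y.toSpecΓ ≫ Spec.map (CommRingCat.ofHom C.subtype)) ⁻¹ᵁ
      (PrimeSpectrum.basicOpen (⟨a, ha⟩ : C) : (Spec (CommRingCat.of C)).Opens)) :
    Function.Bijective ((Y.toSpecΓ ≫ Spec.map (CommRingCat.ofHom C.subtype)).appLE
      (PrimeSpectrum.basicOpen (⟨a, ha⟩ : C) : (Spec (CommRingCat.of C)).Opens)
      (Y.basicOpen a) e) := by
  set R : CommRingCat := CommRingCat.of C with hR
  set φ : R ⟶ Γ(Y, ⊤) := CommRingCat.ofHom C.subtype with hφ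
  set f : Y ⟶ Spec R := Y.toSpecΓ ≫ Spec.map φ with hf
  set c : ↥R := ⟨a, ha⟩ with hc
  set D : (Spec R).Opens := (PrimeSpectrum.basicOpen c : (Spec R).Opens) with hD
  set V : Y.Opens := Y.basicOpen a with hV
  set ψ := f.appLE D V e with hψ
  letI algRD : Algebra R Γ(Spec R, D) :=
    (fun (S : CommRingCat) (U : (Spec S).Opens) => (inferInstance : Algebra S Γ(Spec S, U))) R D
  haveI locP : IsLocalization.Away c Γ(Spec R, D) :=
    @IsAffineOpen.instAwayCarrierObjOppositeOpensCarrierCarrierCommRingCatSpecPresheafOpOpensBasicOpen R c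
  haveI locB : IsLocalization.Away a Γ(Y, V) :=
    isLocalization_basicOpen_of_qcqs (X := Y) (U := ⊤) isCompact_univ isQuasiSeparated_univ a
  have hfTop : f.appTop = (Scheme.ΓSpecIso R).hom ≫ φ := by
    rw [hf, Scheme.Hom.comp_appTop, Scheme.toSpecΓ_appTop, Scheme.ΓSpecIso_naturality]
  have hkey : (Scheme.ΓSpecIso R).inv ≫ (Spec R).presheaf.map (homOfLE (le_top : D ≤ ⊤)).op ≫ ψ
      = φ ≫ Y.presheaf.map (homOfLE (le_top : V ≤ ⊤)).op := by
    rw [hψ, Scheme.Hom.map_appLE, Scheme.Hom.appLE, ← Scheme.Hom.appTop, hfTop]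
    simp
  have hcomm : ∀ x : ↥R, ψ (algebraMap ↥R Γ(Spec R, D) x) =
      Y.presheaf.map (homOfLE (le_top : V ≤ ⊤)).op (φ x) := by
    intro x
    have h := ConcreteCategory.congr_hom hkey x
    exact h
  -- identify ψ with the localization map induced by C.subtype
  haveI locB' : IsLocalization ((Submonoid.powers c).map (C.subtype : ↥R →+* Γ(Y, ⊤)))
      Γ(Y, V) := by
    rw [Submonoid.map_powers]
    exact locB
  set μ : Γ(Spec R, D) →+* Γ(Y, V) :=
    IsLocalization.map (M := Submonoid.powers c) Γ(Y, V) (C.subtype : ↥R →+* Γ(Y, ⊤))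
      (Submonoid.powers c).le_comap_map with hμ
  have hψμ : ψ.hom = μ := by
    apply IsLocalization.ringHom_ext (Submonoid.powers c)
    ext x
    simp only [RingHom.comp_apply]
    rw [hcomm x, hμ, IsLocalization.map_eq]
    rfl
  have hinj : Function.Injective μ :=
    IsLocalization.map_injective_of_injective (M := Submonoid.powers c)
      (S := Γ(Spec R, D)) (Q := Γ(Y, V)) (fun x y hxy => Subtype.ext hxy)
  have hu : IsUnit ((Y.presheaf.map (homOfLE (le_top : V ≤ ⊤)).op) a) := by
    have := IsLocalization.map_units (M := Submonoid.powers a) Γ(Y, V)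
      ⟨a, Submonoid.mem_powers a⟩
    exact this
  set h0 : Γ(Y, V) := ↑hu.unit⁻¹ with hh0def
  have hh0 : h0 * (Y.presheaf.map (homOfLE (le_top : V ≤ ⊤)).op) a = 1 := by
    rw [hh0def]
    exact IsUnit.val_inv_mul hu
  have hcl := hgen h0 hh0
  have hφc : (C.subtype : ↥R →+* Γ(Y, ⊤)) c = a := rfl
  have hsub : Subring.closure
      ((Y.presheaf.map (homOfLE (le_top : V ≤ ⊤)).op) '' (C : Set Γ(Y, ⊤)) ∪ {h0}) ≤
      RingHom.range ψ.hom := by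
    apply Subring.closure_le.mpr
    rintro x (hx | hx)
    · obtain ⟨y, hy, rfl⟩ := hx
      exact ⟨algebraMap ↥R Γ(Spec R, D) ⟨y, hy⟩, hcomm _⟩
    · rcases Set.mem_singleton_iff.mp hx with rfl
      refine ⟨IsLocalization.mk' Γ(Spec R, D) (1 : ↥R) ⟨c, Submonoid.mem_powers c⟩, ?_⟩
      have hs := IsLocalization.mk'_spec Γ(Spec R, D) (1 : ↥R) ⟨c, Submonoid.mem_powers c⟩
      have h1 := congrArg ψ hs
      rw [map_mul, map_one] at h1
      rw [hcomm c, map_one] at h1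
      have h1' : ψ (IsLocalization.mk' Γ(Spec R, D) (1 : ↥R) ⟨c, Submonoid.mem_powers c⟩) *
          (Y.presheaf.map (homOfLE (le_top : V ≤ ⊤)).op) a = 1 := h1
      calc ψ (IsLocalization.mk' Γ(Spec R, D) (1 : ↥R) ⟨c, Submonoid.mem_powers c⟩)
          = ψ (IsLocalization.mk' Γ(Spec R, D) (1 : ↥R) ⟨c, Submonoid.mem_powers c⟩) *
            (h0 * (Y.presheaf.map (homOfLE (le_top : V ≤ ⊤)).op) a) := by rw [hh0, mul_one]
        _ = h0 * (ψ (IsLocalization.mk' Γ(Spec R, D) (1 : ↥R) ⟨c, Submonoid.mem_powers c⟩) *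
            (Y.presheaf.map (homOfLE (le_top : V ≤ ⊤)).op) a) := by ring
        _ = h0 := by rw [h1', mul_one]
  have hsurj : Function.Surjective ψ := by
    intro b
    have hb : b ∈ Subring.closure
        ((Y.presheaf.map (homOfLE (le_top : V ≤ ⊤)).op) '' (C : Set Γ(Y, ⊤)) ∪ {h0}) := by
      rw [hcl]; exact Subring.mem_top b
    exact hsub hb
  refine ⟨?_, hsurj⟩
  have : (⇑ψ : Γ(Spec R, D) → Γ(Y, V)) = ⇑μ := congrArg _ hψμ
  rw [this]
  exact hinj

set_option maxHeartbeats 1000000 in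
lemma aux_isIso (Y : Scheme.{u}) [CompactSpace Y] [QuasiSeparatedSpace Y]
    (a : Γ(Y, ⊤)) (C : Subring Γ(Y, ⊤)) (ha : a ∈ C)
    (haff : IsAffineOpen (Y.basicOpen a))
    (hgen : ∀ h : Γ(Y, Y.basicOpen a),
      h * (Y.presheaf.map (homOfLE (le_top : Y.basicOpen a ≤ ⊤)).op) a = 1 →
      Subring.closure
        ((Y.presheaf.map (homOfLE (le_top : Y.basicOpen a ≤ ⊤)).op) '' (C : Set Γ(Y, ⊤))
          ∪ {h}) = ⊤)
    (e : Y.basicOpen a ≤ (Y.toSpecΓ ≫ Spec.map (CommRingCat.ofHom C.subtype)) ⁻¹ᵁ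
      (PrimeSpectrum.basicOpen (⟨a, ha⟩ : C) : (Spec (CommRingCat.of C)).Opens)) :
    IsIso ((Y.toSpecΓ ≫ Spec.map (CommRingCat.ofHom C.subtype)).resLE
      (PrimeSpectrum.basicOpen (⟨a, ha⟩ : C) : (Spec (CommRingCat.of C)).Opens)
      (Y.basicOpen a) e) := by
  have hbij := aux_bij Y a C ha hgen e
  haveI h1 : IsAffine (Y.basicOpen a).toScheme := haff
  have h2' : IsAffineOpen (X := Spec (CommRingCat.of C))
      (PrimeSpectrum.basicOpen (⟨a, ha⟩ : C)) := IsAffineOpen.Spec_basicOpen _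
  haveI h2 : IsAffine (Scheme.Opens.toScheme (X := Spec (CommRingCat.of C))
      (PrimeSpectrum.basicOpen (⟨a, ha⟩ : C))) := h2'
  rw [← MorphismProperty.isomorphisms.iff,
    @HasAffineProperty.iff_of_isAffine _ _
      instHasAffinePropertyIsomorphismsSchemeAndIsAffineIsIsoCommRingCatAppTop]
  refine ⟨h1, ?_⟩
  rw [← MorphismProperty.isomorphisms.iff]
  rw [(MorphismProperty.isomorphisms CommRingCat).arrow_mk_iso_iff
    (arrowResLEAppIso (Y.toSpecΓ ≫ Spec.map (CommRingCat.ofHom C.subtype))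
      (PrimeSpectrum.basicOpen (⟨a, ha⟩ : C) : (Spec (CommRingCat.of C)).Opens)
      (Y.basicOpen a) e)]
  rw [MorphismProperty.isomorphisms.iff, ConcreteCategory.isIso_iff_bijective]
  exact hbij


set_option maxHeartbeats 1600000

/-- Lemma 3.3: let `Y` be a quasi-compact quasi-separated scheme covered by affine basic
open subsets `Y_{g i}`, and let `C` be a subring of `Γ(Y, O_Y)` containing the `g i` such
that each `Γ(Y_{g i}, O_Y)` is generated as a ring by the image of `C` together with the
inverse of (the restriction of) `g i`. Then the canonical morphism `Y ⟶ Spec C` is an open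
immersion, and it maps each `Y_{g i}` onto the basic open subset of `Spec C` defined by
`g i`, hence restricts to isomorphisms `Y_{g i} ≅ (Spec C)_{g i}`. -/
theorem open_immersion_into_spec_subring
    (Y : Scheme.{u}) [CompactSpace Y] [QuasiSeparatedSpace Y]
    (s : ℕ) (g : Fin s → Γ(Y, ⊤))
    (hcover : (⨆ i, Y.basicOpen (g i)) = ⊤)
    (haffine : ∀ i, IsAffineOpen (Y.basicOpen (g i)))
    (C : Subring Γ(Y, ⊤)) (hgC : ∀ i, g i ∈ C)
    (hgen : ∀ i, ∀ h : Γ(Y, Y.basicOpen (g i)),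
      h * (Y.presheaf.map (homOfLE (le_top : Y.basicOpen (g i) ≤ ⊤)).op) (g i) = 1 →
      Subring.closure
        ((Y.presheaf.map (homOfLE (le_top : Y.basicOpen (g i) ≤ ⊤)).op) '' (C : Set Γ(Y, ⊤))
          ∪ {h}) = ⊤) :
    IsOpenImmersion (Y.toSpecΓ ≫ Spec.map (CommRingCat.ofHom C.subtype)) ∧
      ∀ i, (Y.toSpecΓ ≫ Spec.map (CommRingCat.ofHom C.subtype)).base ''
          (Y.basicOpen (g i) : Set Y)
        = (PrimeSpectrum.basicOpen (⟨g i, hgC i⟩ : C) : Set (PrimeSpectrum C)) := by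
  set R : CommRingCat := CommRingCat.of C with hR
  set f : Y ⟶ Spec R := Y.toSpecΓ ≫ Spec.map (CommRingCat.ofHom C.subtype) with hfdef
  set D : Fin s → (Spec R).Opens :=
    fun i => (PrimeSpectrum.basicOpen (⟨g i, hgC i⟩ : C) : (Spec R).Opens) with hDdef
  have hfTop : f.appTop = (Scheme.ΓSpecIso R).hom ≫ CommRingCat.ofHom C.subtype := by
    rw [hfdef, Scheme.Hom.comp_appTop, Scheme.toSpecΓ_appTop, Scheme.ΓSpecIso_naturality]
  -- preimages of the principal opens
  have hpre : ∀ i, f ⁻¹ᵁ D i = Y.basicOpen (g i) := by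
    intro i
    show f ⁻¹ᵁ (PrimeSpectrum.basicOpen (⟨g i, hgC i⟩ : C) : (Spec R).Opens) = Y.basicOpen (g i)
    rw [← basicOpen_eq_of_affine (R := R) (⟨g i, hgC i⟩ : C), Scheme.preimage_basicOpen]
    congr 1
    show f.appTop ((Scheme.ΓSpecIso R).inv ⟨g i, hgC i⟩) = g i
    rw [hfTop]
    show C.subtype (((Scheme.ΓSpecIso R).inv ≫ (Scheme.ΓSpecIso R).hom) ⟨g i, hgC i⟩) = g i
    rw [Iso.inv_hom_id]
    rfl
  have he : ∀ i, Y.basicOpen (g i) ≤ f ⁻¹ᵁ D i := fun i => (hpre i).ge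
  have hiso : ∀ i, IsIso (f.resLE (D i) (Y.basicOpen (g i)) (he i)) :=
    fun i => aux_isIso Y (g i) C (hgC i) (haffine i) (hgen i) (he i)
  -- Part 2 : images
  have himg : ∀ i, f.base '' (Y.basicOpen (g i) : Set Y) = (D i : Set (Spec R)) := by
    intro i
    apply subset_antisymm
    · rintro _ ⟨x, hx, rfl⟩
      have hx' : x ∈ f ⁻¹ᵁ D i := by rw [hpre i]; exact hx
      exact hx'
    · intro y hy
      letI r := f.resLE (D i) (Y.basicOpen (g i)) (he i)
      haveI := hiso i
      refine ⟨(Y.basicOpen (g i)).ι.base ((inv r).base ⟨y, hy⟩), ?_, ?_⟩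
      · have hr : Set.range (Y.basicOpen (g i)).ι.base = (Y.basicOpen (g i) : Set Y) :=
          Scheme.Opens.range_ι _
        exact hr ▸ ⟨_, rfl⟩
      · have hcomp : (Y.basicOpen (g i)).ι ≫ f = r ≫ (D i).ι :=
          (Scheme.Hom.resLE_comp_ι f (he i)).symm
        have h5 : (inv r ≫ r ≫ (D i).ι).base ⟨y, hy⟩ = ((D i).ι).base ⟨y, hy⟩ := by
          rw [IsIso.inv_hom_id_assoc]
        calc f.base ((Y.basicOpen (g i)).ι.base ((inv r).base ⟨y, hy⟩))
            = ((Y.basicOpen (g i)).ι ≫ f).base ((inv r).base ⟨y, hy⟩) :=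
              rfl
          _ = (r ≫ (D i).ι).base ((inv r).base ⟨y, hy⟩) := by rw [hcomp]
          _ = (inv r ≫ r ≫ (D i).ι).base ⟨y, hy⟩ :=
              rfl
          _ = ((D i).ι).base ⟨y, hy⟩ := h5
          _ = y := rfl
  -- Part 1 : open immersion
  set U : (Spec R).Opens := ⨆ i, D i with hUdef
  have hrange : Set.range f.base ⊆ Set.range U.ι.base := by
    rw [Scheme.Opens.range_ι]
    rintro _ ⟨x, rfl⟩
    have hx : x ∈ (⊤ : Y.Opens) := trivial
    rw [← hcover] at hx
    obtain ⟨i, hxi⟩ := Opens.mem_iSup.mp hx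
    exact Opens.mem_iSup.mpr ⟨i, he i hxi⟩
  letI f' := IsOpenImmersion.lift U.ι f hrange
  have hfac : f' ≫ U.ι = f := IsOpenImmersion.lift_fac U.ι f hrange
  haveI hiso' : IsIso f' := by
    rw [← MorphismProperty.isomorphisms.iff]
    apply IsZariskiLocalAtTarget.of_iSup_eq_top (P := MorphismProperty.isomorphisms Scheme)
      (fun i => U.ι ⁻¹ᵁ D i)
    · apply eq_top_iff.mpr
      rintro ⟨x, hx⟩ -
      rw [hUdef] at hx
      obtain ⟨i, hxi⟩ := Opens.mem_iSup.mp hx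
      exact Opens.mem_iSup.mpr ⟨i, hxi⟩
    · intro i
      rw [MorphismProperty.isomorphisms.iff, ← Scheme.Hom.resLE_eq_morphismRestrict]
      have hb : IsIso ((U.ι).resLE (D i) (U.ι ⁻¹ᵁ D i) le_rfl) := by
        rw [← MorphismProperty.isomorphisms.iff, isomorphisms_eq_isOpenImmersion_inf_surjective]
        constructor
        · show IsOpenImmersion _
          delta Scheme.Hom.resLE
          infer_instance
        · constructor
          intro z
          have hz : ((D i).ι.base z : Spec R) ∈ U := by
            rw [hUdef]
            exact Opens.mem_iSup.mpr ⟨i, z.2⟩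
          refine ⟨(⟨⟨(D i).ι.base z, hz⟩, z.2⟩ : (U.ι ⁻¹ᵁ D i).toScheme), ?_⟩
          apply (Scheme.Opens.ι (D i)).isOpenEmbedding.injective
          calc (D i).ι.base ((Scheme.Hom.resLE U.ι (D i) (U.ι ⁻¹ᵁ D i) le_rfl).base
                (⟨⟨(D i).ι.base z, hz⟩, z.2⟩ : (U.ι ⁻¹ᵁ D i).toScheme))
              = ((Scheme.Hom.resLE U.ι (D i) (U.ι ⁻¹ᵁ D i) le_rfl) ≫ (D i).ι).base
                (⟨⟨(D i).ι.base z, hz⟩, z.2⟩ : (U.ι ⁻¹ᵁ D i).toScheme) :=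
                rfl
            _ = ((U.ι ⁻¹ᵁ D i).ι ≫ U.ι).base
                (⟨⟨(D i).ι.base z, hz⟩, z.2⟩ : (U.ι ⁻¹ᵁ D i).toScheme) := by
                rw [Scheme.Hom.resLE_comp_ι]
            _ = (D i).ι.base z := rfl
      haveI := hb
      have hcompiso : IsIso ((f'.resLE (U.ι ⁻¹ᵁ D i) (f' ⁻¹ᵁ (U.ι ⁻¹ᵁ D i)) le_rfl) ≫
          (U.ι).resLE (D i) (U.ι ⁻¹ᵁ D i) le_rfl) := by
        rw [Scheme.Hom.resLE_comp_resLE]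
        have hgen2 : ∀ (fb : Y ⟶ Spec R) (hfb : fb = f) (W : Y.Opens)
            (hW : W = Y.basicOpen (g i)) (hle : W ≤ fb ⁻¹ᵁ D i),
            IsIso (fb.resLE (D i) W hle) := by
          rintro fb rfl W rfl hle
          exact hiso i
        refine hgen2 _ hfac _ ?_ _
        rw [← Scheme.Hom.comp_preimage, hfac, hpre i]
      exact IsIso.of_isIso_comp_right _ ((U.ι).resLE (D i) (U.ι ⁻¹ᵁ D i) le_rfl)
  constructor
  · rw [← hfac]
    infer_instance
  · intro i
    exact himg i
end

section
/- Let k be a field, n a natural number, and X an integral scheme over k that admits a nonempty open subscheme U together with an isomorphism of k-schemes U ≅ 𝔸ⁿ_k, where 𝔸ⁿ_k = Spec k[x_1, …, x_n] is affine n-space over k. Then every unit of the ring Γ(X, O_X) of global regular functions lies in the image of k, i.e. every invertible global regular function on X is a constant. -/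
open AlgebraicGeometry CategoryTheory

lemma mv_unit_eq_C {R : Type*} [CommRing R] [IsDomain R] :
    ∀ (n : ℕ) (p : MvPolynomial (Fin n) R), IsUnit p → ∃ r : R, IsUnit r ∧ p = MvPolynomial.C r := by
  intro n
  induction n with
  | zero =>
    intro p hp
    obtain ⟨r, hr⟩ : ∃ r, p = MvPolynomial.C r := ⟨_, MvPolynomial.eq_C_of_isEmpty p⟩
    exact ⟨r, by simpa [hr] using hp.map MvPolynomial.constantCoeff, hr⟩
  | succ n ih =>
    intro p hp
    have h1 : IsUnit (MvPolynomial.finSuccEquiv R n p) := hp.map (MvPolynomial.finSuccEquiv R n)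
    have h2 := Polynomial.natDegree_eq_zero_of_isUnit h1
    have h3 := Polynomial.eq_C_of_natDegree_eq_zero h2
    have h4 : IsUnit ((MvPolynomial.finSuccEquiv R n p).coeff 0) := by
      rw [h3] at h1; exact Polynomial.isUnit_C.mp h1
    obtain ⟨r, hr, hr2⟩ := ih _ h4
    refine ⟨r, hr, ?_⟩
    apply (MvPolynomial.finSuccEquiv R n).injective
    rw [h3, hr2]
    simp [MvPolynomial.finSuccEquiv_apply]

/-- If an integral scheme `X` over a field `k` contains a nonempty open subscheme `U`
isomorphic over `k` to affine `n`-space `𝔸ⁿ_k = Spec k[x_1, …, x_n]`, then every invertible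
global regular function on `X` is a constant, i.e. lies in the image of `k`. -/
theorem units_global_sections_constant_of_open_affineSpace
    {k : Type u} [Field k] (n : ℕ) (X : Scheme.{u}) [IsIntegral X]
    (f : X ⟶ Spec (CommRingCat.of k)) (U : X.Opens) (hU : (U : Set X).Nonempty)
    (e : U.toScheme ≅ Spec (CommRingCat.of (MvPolynomial (Fin n) k)))
    (he : e.hom ≫ Spec.map (CommRingCat.ofHom (algebraMap k (MvPolynomial (Fin n) k)))
        = U.ι ≫ f) :
    ∀ u : Γ(X, ⊤), IsUnit u →
      ∃ c : k, u = ((Scheme.ΓSpecIso (CommRingCat.of k)).inv ≫ Scheme.Γ.map f.op) c := by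
  intro u hu
  have hne : Nonempty (U.ι ''ᵁ (⊤ : U.toScheme.Opens)) := by
    obtain ⟨x, hx⟩ := hU
    exact ⟨⟨x, by simpa using hx⟩⟩
  have hinj : Function.Injective (Scheme.Γ.map U.ι.op) := by
    rw [Scheme.Γ_map_op, Scheme.Opens.ι_appTop]
    exact map_injective_of_isIntegral X (homOfLE le_top)
  set p : MvPolynomial (Fin n) k :=
    (Scheme.ΓSpecIso (CommRingCat.of (MvPolynomial (Fin n) k))).hom (Scheme.Γ.map e.inv.op (Scheme.Γ.map U.ι.op u)) with hp
  have hpu : IsUnit p :=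
    ((hu.map (Scheme.Γ.map U.ι.op).hom).map (Scheme.Γ.map e.inv.op).hom).map (Scheme.ΓSpecIso (CommRingCat.of (MvPolynomial (Fin n) k))).hom.hom
  obtain ⟨c, -, hc⟩ := mv_unit_eq_C n p hpu
  refine ⟨c, hinj ?_⟩
  have key : (Scheme.ΓSpecIso (CommRingCat.of k)).inv ≫ Scheme.Γ.map f.op ≫ Scheme.Γ.map U.ι.op
      = CommRingCat.ofHom (algebraMap k (MvPolynomial (Fin n) k)) ≫
        (Scheme.ΓSpecIso (CommRingCat.of (MvPolynomial (Fin n) k))).inv ≫ Scheme.Γ.map e.hom.op := by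
    erw [← Scheme.Γ.map_comp, ← op_comp, ← he, op_comp, Scheme.Γ.map_comp,
      ← Category.assoc, ← Category.assoc]
    congr 1
    erw [Scheme.Γ_map_op (Spec.map (CommRingCat.ofHom (algebraMap k (MvPolynomial (Fin n) k)))),
      ← Scheme.ΓSpecIso_inv_naturality]
  have cancel : ∀ x : Γ(Spec (CommRingCat.of (MvPolynomial (Fin n) k)), ⊤),
      (Scheme.ΓSpecIso (CommRingCat.of (MvPolynomial (Fin n) k))).inv
        ((Scheme.ΓSpecIso (CommRingCat.of (MvPolynomial (Fin n) k))).hom x) = x :=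
    fun x => (Scheme.ΓSpecIso
      (CommRingCat.of (MvPolynomial (Fin n) k))).commRingCatIsoToRingEquiv.symm_apply_apply x
  have hcomp : Scheme.Γ.map e.inv.op ≫ Scheme.Γ.map e.hom.op = 𝟙 _ := by
    rw [← Scheme.Γ.map_comp, ← op_comp, e.hom_inv_id, op_id, Scheme.Γ.map_id]
  have h1 : Scheme.Γ.map U.ι.op u = Scheme.Γ.map e.hom.op
      ((Scheme.ΓSpecIso (CommRingCat.of (MvPolynomial (Fin n) k))).inv p) := by
    rw [hp]; erw [cancel]
    exact (CategoryTheory.ConcreteCategory.congr_hom hcomp (Scheme.Γ.map U.ι.op u)).symm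
  calc Scheme.Γ.map U.ι.op u
      = Scheme.Γ.map e.hom.op
        ((Scheme.ΓSpecIso (CommRingCat.of (MvPolynomial (Fin n) k))).inv
          (algebraMap k (MvPolynomial (Fin n) k) c)) := by
        rw [h1, hc, MvPolynomial.algebraMap_eq]
    _ = (CommRingCat.ofHom (algebraMap k (MvPolynomial (Fin n) k)) ≫
          (Scheme.ΓSpecIso (CommRingCat.of (MvPolynomial (Fin n) k))).inv ≫
          Scheme.Γ.map e.hom.op) c := rfl
    _ = ((Scheme.ΓSpecIso (CommRingCat.of k)).inv ≫ Scheme.Γ.map f.op ≫ Scheme.Γ.map U.ι.op) c :=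
        by rw [key]
    _ = Scheme.Γ.map U.ι.op (((Scheme.ΓSpecIso (CommRingCat.of k)).inv ≫ Scheme.Γ.map f.op) c) :=
        rfl
end

section
/- Let k be a field, n a natural number, and X an integral scheme over k that admits a nonempty open subscheme U together with an isomorphism of k-schemes U ≅ 𝔸ⁿ_k. Then the function field of X is isomorphic as a k-algebra to the rational function field k(x_1, …, x_n), i.e. to the field of fractions of the polynomial ring k[x_1, …, x_n]. -/
open AlgebraicGeometry CategoryTheory

/-- If an integral scheme `X` over a field `k` contains a nonempty open subscheme `U`
isomorphic over `k` to affine `n`-space `𝔸ⁿ_k`, then the function field of `X` is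
isomorphic as a `k`-algebra to the rational function field `k(x_1, …, x_n)`, i.e. the
field of fractions of the polynomial ring `k[x_1, …, x_n]`. -/
theorem functionField_isomorphic_fractionRing_of_open_affineSpace
    {k : Type u} [Field k] (n : ℕ) (X : Scheme.{u}) [IsIntegral X]
    (f : X ⟶ Spec (CommRingCat.of k)) (U : X.Opens) (hU : (U : Set X).Nonempty)
    (e : U.toScheme ≅ Spec (CommRingCat.of (MvPolynomial (Fin n) k)))
    (he : e.hom ≫ Spec.map (CommRingCat.ofHom (algebraMap k (MvPolynomial (Fin n) k)))
        = U.ι ≫ f) :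
    haveI : Nonempty (⊤ : X.Opens) := ⟨⟨hU.choose, trivial⟩⟩
    letI : Algebra k X.functionField :=
      (((X.germToFunctionField ⊤).hom.comp
        ((Scheme.ΓSpecIso (CommRingCat.of k)).inv ≫ Scheme.Γ.map f.op).hom :
          k →+* X.functionField)).toAlgebra
    letI : Algebra k (FractionRing (MvPolynomial (Fin n) k)) :=
      ((algebraMap (MvPolynomial (Fin n) k) (FractionRing (MvPolynomial (Fin n) k))).comp
        (algebraMap k (MvPolynomial (Fin n) k))).toAlgebra
    Nonempty (X.functionField ≃ₐ[k] FractionRing (MvPolynomial (Fin n) k)) := by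
  haveI hne : Nonempty U := ⟨⟨hU.choose, hU.choose_spec⟩⟩
  haveI hnetop : Nonempty (⊤ : X.Opens) := ⟨⟨hU.choose, trivial⟩⟩
  haveI hAff : IsAffine U.toScheme := IsAffine.of_isIso e.hom
  have hUaff : IsAffineOpen U := hAff
  haveI := functionField_isFractionRing_of_isAffineOpen X U hUaff
  set P := MvPolynomial (Fin n) k with hP
  let φiso : CommRingCat.of P ≅ Γ(X, U) :=
    (Scheme.ΓSpecIso (CommRingCat.of P)).symm ≪≫ Scheme.Γ.mapIso e.op ≪≫ U.topIso
  let φ : P ≃+* Γ(X, U) := φiso.commRingCatIsoToRingEquiv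
  let ψ : FractionRing P ≃+* X.functionField := IsFractionRing.ringEquivOfRingEquiv φ
  have key : CommRingCat.ofHom (algebraMap k P) ≫ φiso.hom
      = (Scheme.ΓSpecIso (CommRingCat.of k)).inv ≫ Scheme.Γ.map f.op
          ≫ X.presheaf.map (homOfLE (le_top : U ≤ ⊤)).op := by
    have h1 : φiso.hom
        = (Scheme.ΓSpecIso (CommRingCat.of P)).inv ≫ Scheme.Γ.map e.hom.op
            ≫ U.topIso.hom := by
      rfl
    rw [h1, ← Category.assoc, Scheme.ΓSpecIso_inv_naturality, Category.assoc]
    congr 1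
    have h2 : (Spec.map (CommRingCat.ofHom (algebraMap k P))).appTop
          ≫ Scheme.Γ.map e.hom.op
        = (e.hom ≫ Spec.map (CommRingCat.ofHom (algebraMap k P))).appTop := by
      simp [Scheme.Γ_map]
    erw [← Category.assoc, h2, he]
    have h3 : (U.ι ≫ f).appTop = f.appTop ≫ U.ι.appTop := by simp
    erw [h3, Category.assoc]
    congr 1
    erw [Scheme.Opens.ι_appTop, Scheme.Opens.topIso_hom, ← Functor.map_comp, ← op_comp]
    congr 1
  letI : Algebra k X.functionField :=
    (((X.germToFunctionField ⊤).hom.comp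
      ((Scheme.ΓSpecIso (CommRingCat.of k)).inv ≫ Scheme.Γ.map f.op).hom :
        k →+* X.functionField)).toAlgebra
  letI : Algebra k (FractionRing P) :=
    ((algebraMap P (FractionRing P)).comp (algebraMap k P)).toAlgebra
  refine ⟨AlgEquiv.ofRingEquiv (f := ψ.symm) (fun c => ?_)⟩
  have main : (algebraMap k X.functionField) c
      = ψ ((algebraMap k (FractionRing P)) c) := by
    show _ = ψ ((algebraMap P (FractionRing P)) (algebraMap k P c))
    rw [IsFractionRing.ringEquivOfRingEquiv_algebraMap]
    have key2 : CommRingCat.ofHom (algebraMap k P) ≫ φiso.hom ≫ X.germToFunctionField U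
        = ((Scheme.ΓSpecIso (CommRingCat.of k)).inv ≫ Scheme.Γ.map f.op)
            ≫ X.germToFunctionField ⊤ := by
      rw [← Category.assoc, key]
      simp only [Category.assoc]
      erw [Category.assoc, X.presheaf.germ_res (homOfLE le_top)]
      rfl
    exact (congrArg (fun (g : CommRingCat.of k ⟶ X.functionField) => g c) key2).symm
  rw [main, RingEquiv.symm_apply_apply]
end
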